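/- Let n ≥ 1 and m ≥ 1, let A_0, A_1, …, A_m be n×n complex matrices, and let α ∈ ℂ with α ≠ 0. Let r ≥ 1 and let φ⁽¹⁾, …, φ⁽ʳ⁾ : Fin n → ℂ each satisfy ∑_{k=0}^{m} α^{m−k} • (A_k).mulVec φ⁽ʲ⁾ = 0, let c_1, …, c_r ∈ ℂ, and set φ := ∑_{j=1}^{r} c_j • φ⁽ʲ⁾. If every component of φ is nonzero, then the vector function u i t := (φ i)⁻¹ * Complex.exp (α * t) satisfies, for every t ∈ ℂ, ∑_{k=0}^{m} (A_k).mulVec (fun i => (iteratedDeriv k (u i) t)⁻¹) = 0; that is, every linear combination of eigenvectors corresponding to the same zero α whose components are all nonzero gives a solution of the nonlinear system A_m (u^{(m)})^{−1} + ⋯ + A_0 u^{−1} = 0. -/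

import Mathlib

lemma aux_iter (c α : ℂ) (k : ℕ) (t : ℂ) :
    iteratedDeriv k (fun s => c * Complex.exp (α * s)) t = c * α ^ k * Complex.exp (α * t) := by
  induction k generalizing t with
  | zero => simp
  | succ k ih =>
    rw [iteratedDeriv_succ]
    have h : deriv (iteratedDeriv k (fun s => c * Complex.exp (α * s))) t
        = deriv (fun s => c * α ^ k * Complex.exp (α * s)) t := by
      apply Filter.EventuallyEq.deriv_eq
      filter_upwards with s using ih s
    have hd : HasDerivAt (fun s => c * α ^ k * Complex.exp (α * s))
        (c * α ^ (k+1) * Complex.exp (α * t)) t := by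
      have h1 : HasDerivAt (fun s : ℂ => α * s) α t := by
        simpa using (hasDerivAt_id t).const_mul α
      have h2 := (Complex.hasDerivAt_exp (α * t)).comp t h1
      have := h2.const_mul (c * α ^ k)
      refine this.congr_deriv ?_
      ring
    rw [h, hd.deriv]

/-- Let `A_0, …, A_m` be `n × n` complex matrices and `α ≠ 0`. Let
`φ⁽¹⁾, …, φ⁽ʳ⁾` (`r ≥ 1`) each satisfy `∑_{k=0}^m α^(m−k) • A_k.mulVec φ⁽ʲ⁾ = 0`, let
`c_1, …, c_r ∈ ℂ` and set `φ := ∑_j c_j • φs j`.  If every component of `φ` is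
nonzero, then `u i t := (φ i)⁻¹ · exp (α t)` solves the nonlinear system
`A_m (u^(m))⁻¹ + ⋯ + A_0 u⁻¹ = 0` (inverses of vectors taken entrywise). -/
theorem solution_of_nonlinear_system_from_linear_combination_of_eigenvectors
    (n m : ℕ) (hn : 1 ≤ n) (hm : 1 ≤ m)
    (A : Fin (m + 1) → Matrix (Fin n) (Fin n) ℂ)
    (α : ℂ) (hα : α ≠ 0)
    (r : ℕ) (hr : 1 ≤ r)
    (φs : Fin r → Fin n → ℂ)
    (hφs : ∀ j : Fin r, ∑ k : Fin (m + 1), α ^ (m - (k : ℕ)) • (A k).mulVec (φs j) = 0)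
    (c : Fin r → ℂ)
    (φ : Fin n → ℂ) (hφdef : φ = ∑ j : Fin r, c j • φs j)
    (hφ : ∀ i, φ i ≠ 0) :
    ∀ t : ℂ,
      ∑ k : Fin (m + 1),
        (A k).mulVec
          (fun i => (iteratedDeriv (k : ℕ) (fun s => (φ i)⁻¹ * Complex.exp (α * s)) t)⁻¹) = 0 := by
  intro t
  -- φ satisfies the eigen-equation
  have hφeq : ∑ k : Fin (m + 1), α ^ (m - (k : ℕ)) • (A k).mulVec φ = 0 := by
    subst hφdef
    have : ∀ k : Fin (m+1),
        α ^ (m - (k : ℕ)) • (A k).mulVec (∑ j : Fin r, c j • φs j)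
        = ∑ j : Fin r, c j • (α ^ (m - (k : ℕ)) • (A k).mulVec (φs j)) := by
      intro k
      rw [show (A k).mulVec (∑ j : Fin r, c j • φs j) = ∑ j : Fin r, (A k).mulVec (c j • φs j)
        from map_sum ((A k).mulVecLin) _ _, Finset.smul_sum]
      exact Finset.sum_congr rfl fun j _ => by rw [Matrix.mulVec_smul]; exact smul_comm _ _ _
    rw [Finset.sum_congr rfl fun k _ => this k, Finset.sum_comm]
    simp only [← Finset.smul_sum, hφs, smul_zero, Finset.sum_const_zero]
  have he : Complex.exp (α * t) ≠ 0 := Complex.exp_ne_zero _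
  -- rewrite each summand
  have key : ∀ k : Fin (m + 1),
      (fun i => (iteratedDeriv (k : ℕ) (fun s => (φ i)⁻¹ * Complex.exp (α * s)) t)⁻¹)
      = ((α ^ (k : ℕ))⁻¹ * (Complex.exp (α * t))⁻¹) • φ := by
    intro k
    funext i
    rw [aux_iter]
    rw [mul_inv, mul_inv, inv_inv]
    simp only [Pi.smul_apply, smul_eq_mul]
    ring
  calc ∑ k : Fin (m + 1), (A k).mulVec
          (fun i => (iteratedDeriv (k : ℕ) (fun s => (φ i)⁻¹ * Complex.exp (α * s)) t)⁻¹)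
      = ∑ k : Fin (m + 1),
          ((α ^ (k : ℕ))⁻¹ * (Complex.exp (α * t))⁻¹) • (A k).mulVec φ := by
        refine Finset.sum_congr rfl fun k _ => ?_
        rw [key k, Matrix.mulVec_smul]
    _ = ((α ^ m)⁻¹ * (Complex.exp (α * t))⁻¹) •
          ∑ k : Fin (m + 1), α ^ (m - (k : ℕ)) • (A k).mulVec φ := by
        rw [Finset.smul_sum]
        refine Finset.sum_congr rfl fun k _ => ?_
        rw [smul_smul]
        congr 1
        have hk : (k : ℕ) ≤ m := Nat.lt_succ_iff.mp k.isLt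
        have : α ^ (m - (k : ℕ)) * α ^ (k : ℕ) = α ^ m := by
          rw [← pow_add, Nat.sub_add_cancel hk]
        field_simp
        rw [← this]; ring
    _ = 0 := by rw [hφeq, smul_zero]
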